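/- Assume: consistency for a=2; mean transportability for a=2 over S (E[Y²|X=x,S=1]=E[Y²|X=x,S=0] whenever both events have positive probability); external-source positivity P(S=0|X=x)>0 for x with P(X=x,S=1)>0; conditional exchangeability over A given (X,W) in the external data for a=2 (E[Y²|X=x,W=w,S=0]=E[Y²|X=x,W=w,S=0,A=2] whenever P(X=x,W=w,S=0)>0); and positivity P(A=2|X=x,W=w,S=0)>0 whenever P(X=x,W=w,S=0)>0. Then E[Y² | S=1] = μ := Σ_x P(X=x|S=1) · Σ_w E[Y|X=x,W=w,S=0,A=2] · P(W=w|X=x,S=0), with the outer sum over x with P(X=x,S=1)>0 and the inner sum over w with P(X=x,W=w,S=0)>0. -/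
import Mathlib


open Finset
open scoped Classical

noncomputable def pr {Ω : Type*} [Fintype Ω] (P : Ω → ℝ) (E : Ω → Prop) : ℝ :=
  ∑ ω, if E ω then P ω else 0

noncomputable def cexp {Ω : Type*} [Fintype Ω] (P : Ω → ℝ) (Y : Ω → ℝ) (E : Ω → Prop) : ℝ :=
  (∑ ω, if E ω then Y ω * P ω else 0) / pr P E

noncomputable def cpr {Ω : Type*} [Fintype Ω] (P : Ω → ℝ) (E F : Ω → Prop) : ℝ :=
  pr P (fun ω => E ω ∧ F ω) / pr P F

section aux
variable {Ω : Type*} [Fintype Ω] (P : Ω → ℝ)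

lemma pr_nonneg (hP : ∀ ω, 0 ≤ P ω) (E : Ω → Prop) : 0 ≤ pr P E :=
  Finset.sum_nonneg fun ω _ => by by_cases h : E ω <;> simp [h, hP ω]

lemma pr_congr {E F : Ω → Prop} (h : ∀ ω, E ω ↔ F ω) : pr P E = pr P F :=
  Finset.sum_congr rfl fun ω _ => by simp [h ω]

lemma cexp_congr_event (Y : Ω → ℝ) {E F : Ω → Prop} (h : ∀ ω, E ω ↔ F ω) :
    cexp P Y E = cexp P Y F := by
  unfold cexp
  rw [pr_congr P h]
  congr 1
  exact Finset.sum_congr rfl fun ω _ => by simp [h ω]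

lemma P_eq_zero (hP : ∀ ω, 0 ≤ P ω) {E : Ω → Prop} (h : pr P E = 0) :
    ∀ ω, E ω → P ω = 0 := by
  intro ω hω
  have := (Finset.sum_eq_zero_iff_of_nonneg
    (fun ω _ => by by_cases h : E ω <;> simp [h, hP ω])).mp h ω (mem_univ ω)
  simpa [hω] using this

lemma cexp_congr_Y {Y Z : Ω → ℝ} {E : Ω → Prop} (h : ∀ ω, E ω → Y ω = Z ω) :
    cexp P Y E = cexp P Z E := by
  unfold cexp
  congr 1
  refine Finset.sum_congr rfl fun ω _ => ?_
  by_cases hω : E ω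
  · simp [hω, h ω hω]
  · simp [hω]

lemma pos_of_cpr_pos (hP : ∀ ω, 0 ≤ P ω) {E F : Ω → Prop}
    (h : 0 < cpr P E F) : 0 < pr P (fun ω => E ω ∧ F ω) := by
  rcases lt_or_eq_of_le (pr_nonneg P hP (fun ω => E ω ∧ F ω)) with h' | h'
  · exact h'
  · exfalso; rw [cpr, ← h'] at h; simp at h

lemma total_cexp {ι : Type*} [Fintype ι] (hP : ∀ ω, 0 ≤ P ω) (Y : Ω → ℝ)
    (E : Ω → Prop) (f : Ω → ι) :
    cexp P Y E = ∑ i ∈ univ.filter (fun i => 0 < pr P (fun ω => f ω = i ∧ E ω)),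
      (pr P (fun ω => f ω = i ∧ E ω) / pr P E) * cexp P Y (fun ω => f ω = i ∧ E ω) := by
  have key : ∀ i ∈ univ.filter (fun i => 0 < pr P (fun ω => f ω = i ∧ E ω)),
      (pr P (fun ω => f ω = i ∧ E ω) / pr P E) * cexp P Y (fun ω => f ω = i ∧ E ω)
      = (∑ ω, if f ω = i ∧ E ω then Y ω * P ω else 0) / pr P E := by
    intro i hi
    have hi' : pr P (fun ω => f ω = i ∧ E ω) ≠ 0 :=
      ne_of_gt (by simpa using (mem_filter.mp hi).2)
    unfold cexp
    rw [div_mul_div_comm, mul_comm (pr P _), ← div_mul_div_comm,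
      div_self hi', mul_one]
    exact congrArg (· / pr P E) (Finset.sum_congr rfl fun ω _ => by convert rfl)
  rw [Finset.sum_congr rfl key, ← Finset.sum_div]
  unfold cexp
  congr 1
  have hfull : ∑ i ∈ univ.filter (fun i => 0 < pr P (fun ω => f ω = i ∧ E ω)),
      (∑ ω, if f ω = i ∧ E ω then Y ω * P ω else 0)
      = ∑ i, (∑ ω, if f ω = i ∧ E ω then Y ω * P ω else 0) := by
    refine Finset.sum_filter_of_ne fun i _ hne => ?_
    by_contra hpos
    have h0 : pr P (fun ω => f ω = i ∧ E ω) = 0 := by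
      rcases lt_or_eq_of_le (pr_nonneg P hP (fun ω => f ω = i ∧ E ω)) with h' | h'
      · exact absurd h' hpos
      · exact h'.symm
    refine hne (Finset.sum_eq_zero fun ω _ => ?_)
    by_cases hω : f ω = i ∧ E ω
    · simp [hω, P_eq_zero P hP h0 ω hω]
    · simp [hω]
  rw [hfull, Finset.sum_comm]
  refine Finset.sum_congr rfl fun ω _ => ?_
  by_cases hω : E ω
  · simp [hω, Finset.sum_ite_eq]
  · simp [hω]

end aux

theorem stmt11
    {Ω 𝓧 𝓦 : Type*} [Fintype Ω] [Fintype 𝓧] [Fintype 𝓦]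
    (P : Ω → ℝ) (hP : ∀ ω, 0 ≤ P ω) (hPsum : ∑ ω, P ω = 1)
    (X : Ω → 𝓧) (W : Ω → 𝓦) (S : Ω → ℕ) (A : Ω → ℕ) (Y : Ω → ℝ)
    (Y2 : Ω → ℝ)
    (hS1 : 0 < pr P (fun ω => S ω = 1))
    (hcons : ∀ ω, A ω = 2 → Y2 ω = Y ω)
    (htrans : ∀ x, 0 < pr P (fun ω => X ω = x ∧ S ω = 1) → 0 < pr P (fun ω => X ω = x ∧ S ω = 0) → cexp P Y2 (fun ω => X ω = x ∧ S ω = 1) = cexp P Y2 (fun ω => X ω = x ∧ S ω = 0))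
    (hextpos : ∀ x, 0 < pr P (fun ω => X ω = x ∧ S ω = 1) → 0 < cpr P (fun ω => S ω = 0) (fun ω => X ω = x))
    (hexchW : ∀ x w, 0 < pr P (fun ω => X ω = x ∧ W ω = w ∧ S ω = 0) →
      cexp P Y2 (fun ω => X ω = x ∧ W ω = w ∧ S ω = 0) = cexp P Y2 (fun ω => X ω = x ∧ W ω = w ∧ S ω = 0 ∧ A ω = 2))
    (hposW : ∀ x w, 0 < pr P (fun ω => X ω = x ∧ W ω = w ∧ S ω = 0) →
      0 < cpr P (fun ω => A ω = 2) (fun ω => X ω = x ∧ W ω = w ∧ S ω = 0))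
    : cexp P Y2 (fun ω => S ω = 1) =
      ∑ x ∈ univ.filter (fun x => 0 < pr P (fun ω => X ω = x ∧ S ω = 1)),
        (pr P (fun ω => X ω = x ∧ S ω = 1) / pr P (fun ω => S ω = 1)) *
        ∑ w ∈ univ.filter (fun w => 0 < pr P (fun ω => X ω = x ∧ W ω = w ∧ S ω = 0)),
          cexp P Y (fun ω => X ω = x ∧ W ω = w ∧ S ω = 0 ∧ A ω = 2) *
          (pr P (fun ω => X ω = x ∧ W ω = w ∧ S ω = 0) / pr P (fun ω => X ω = x ∧ S ω = 0)) := by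
  rw [total_cexp P hP Y2 (fun ω => S ω = 1) X]
  refine Finset.sum_congr rfl fun x hx => ?_
  have hx1 : 0 < pr P (fun ω => X ω = x ∧ S ω = 1) := by
    simpa using (mem_filter.mp hx).2
  have hx0 : 0 < pr P (fun ω => X ω = x ∧ S ω = 0) := by
    have := pos_of_cpr_pos P hP (hextpos x hx1)
    rwa [pr_congr P (fun ω => and_comm)] at this
  congr 1
  rw [htrans x hx1 hx0, total_cexp P hP Y2 (fun ω => X ω = x ∧ S ω = 0) W]
  have hiff : ∀ w ω, (W ω = w ∧ X ω = x ∧ S ω = 0) ↔ (X ω = x ∧ W ω = w ∧ S ω = 0) := by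
    intro w ω; tauto
  have hfilt : (univ.filter (fun w => 0 < pr P (fun ω => W ω = w ∧ X ω = x ∧ S ω = 0)))
      = univ.filter (fun w => 0 < pr P (fun ω => X ω = x ∧ W ω = w ∧ S ω = 0)) := by
    refine Finset.filter_congr fun w _ => ?_
    rw [pr_congr P (hiff w)]
  rw [hfilt]
  refine Finset.sum_congr rfl fun w hw => ?_
  have hw0 : 0 < pr P (fun ω => X ω = x ∧ W ω = w ∧ S ω = 0) := by
    simpa using (mem_filter.mp hw).2
  rw [pr_congr P (hiff w), cexp_congr_event P Y2 (hiff w), hexchW x w hw0,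
    cexp_congr_Y P (fun ω hω => hcons ω hω.2.2.2)]
  ring
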